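/- (One-step decrease, regime p3.) Let f1 ∈ F_{μ1,L1} and f2 ∈ F_{μ2,L2} with μ1 > −μ2 > 0, L2 > μ1, L1 > μ2, and (1/L1)·(2 + L2/μ2) ≤ 1/μ1 + 1/μ2 + 1/L2 ≤ 0. Let F := f1 − f2 and consider a DCA step from x to x⁺ with g2 ∈ ∂f2(x), g1⁺ ∈ ∂f1(x⁺), g1⁺ = g2, and let g1 ∈ ∂f1(x), g2⁺ ∈ ∂f2(x⁺). Then F(x) − F(x⁺) ≥ σ·(1/2)‖g1 − g2‖² + σ⁺·(1/2)‖g1⁺ − g2⁺‖², where σ = (1/L1)·(1/μ1 + 1/μ2 + 1/L2) / (1/μ1 + 1/μ2 + 1/L2 − 1/L1) and σ⁺ = 1/(L2 + μ2). -/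

import Mathlib

set_option maxHeartbeats 1000000

open RealInnerProductSpace

variable {H : Type*} [NormedAddCommGroup H] [InnerProductSpace ℝ H]

/-- `f` has lower curvature `μ`, i.e. `f - (μ/2)‖·‖²` is convex. -/
def HasLowerCurvature (μ : ℝ) (f : H → ℝ) : Prop :=
  ConvexOn ℝ Set.univ fun x => f x - μ / 2 * ‖x‖ ^ 2

/-- `f` has upper curvature `L`, i.e. `(L/2)‖·‖² - f` is convex. -/
def HasUpperCurvature (L : ℝ) (f : H → ℝ) : Prop :=
  ConvexOn ℝ Set.univ fun x => L / 2 * ‖x‖ ^ 2 - f x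

/-- `g` is a subgradient of `f` (of lower curvature `μ`) at `x`. -/
def IsSubgradient (μ : ℝ) (f : H → ℝ) (x g : H) : Prop :=
  ∀ y, f y ≥ f x + ⟪g, y - x⟫ + μ / 2 * ‖y - x‖ ^ 2

lemma norm_add_smul_sq (v w : H) (c : ℝ) :
    ‖v + c • w‖^2 = ‖v‖^2 + 2*c*⟪v, w⟫ + c^2*‖w‖^2 := by
  rw [norm_add_sq_real, real_inner_smul_right, norm_smul, Real.norm_eq_abs, mul_pow, sq_abs]
  ring

lemma upper_smooth {L μ : ℝ} {f : H → ℝ} (hup : HasUpperCurvature L f)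
    {x g : H} (hg : IsSubgradient μ f x g) (y : H) :
    f y ≤ f x + ⟪g, y - x⟫ + L/2 * ‖y - x‖^2 := by
  have key : ∀ t : ℝ, 0 < t →
      f y ≤ f x + ⟪g, y - x⟫ + L/2 * ‖y - x‖^2 + t*((L-μ)/2*‖y - x‖^2) := by
    intro t ht
    have ht1 : (0:ℝ) < 1 + t := by linarith
    set z := x - t • (y - x) with hz
    have hcomb : (t/(1+t)) • y + (1/(1+t)) • z = x := by
      rw [hz]; match_scalars <;> field_simp <;> ring
    have hconv := hup.2 (Set.mem_univ y) (Set.mem_univ z)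
      (by positivity : (0:ℝ) ≤ t/(1+t)) (by positivity : (0:ℝ) ≤ 1/(1+t))
      (by field_simp; ring)
    simp only [hcomb, smul_eq_mul] at hconv
    have hsub := hg z
    have ezx : z - x = (-t) • (y - x) := by rw [hz]; module
    have hzeq : z = x + (-t) • (y - x) := by rw [hz]; module
    have hyeq : y = x + (1:ℝ) • (y - x) := by module
    rw [ezx, real_inner_smul_right, norm_smul, Real.norm_eq_abs] at hsub
    have hnz : ‖z‖^2 = ‖x‖^2 + 2*(-t)*⟪x, y-x⟫ + (-t)^2*‖y-x‖^2 := by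
      rw [hzeq]; exact norm_add_smul_sq x (y-x) (-t)
    have hny : ‖y‖^2 = ‖x‖^2 + 2*(1:ℝ)*⟪x, y-x⟫ + (1:ℝ)^2*‖y-x‖^2 := by
      nth_rewrite 1 [hyeq]; exact norm_add_smul_sq x (y-x) 1
    have habs : |(-t)| = t := by rw [abs_neg, abs_of_pos ht]
    rw [habs] at hsub
    have hmul := mul_le_mul_of_nonneg_left hconv ht1.le
    have hexp : (1+t)*((t/(1+t))*(L/2*‖y‖^2 - f y) + (1/(1+t))*(L/2*‖z‖^2 - f z))
        = t*(L/2*‖y‖^2 - f y) + (L/2*‖z‖^2 - f z) := by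
      field_simp
    rw [hexp] at hmul
    have tineq : t * f y ≤ t * (f x + ⟪g, y - x⟫ + L/2 * ‖y - x‖^2 + t*((L-μ)/2*‖y - x‖^2)) := by
      rw [hnz] at hmul
      rw [hny] at hmul
      nlinarith [hmul, hsub]
    exact le_of_mul_le_mul_left tineq ht
  rcases le_or_gt ((L-μ)/2*‖y - x‖^2) 0 with hC | hC
  · linarith [key 1 one_pos]
  · refine le_of_forall_pos_le_add ?_
    intro ε hε
    have hk := key (ε/((L-μ)/2*‖y - x‖^2)) (div_pos hε hC)
    rw [div_mul_cancel₀ _ hC.ne'] at hk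
    linarith

lemma interp_ineq {μ L : ℝ} (hμL : μ < L) {f : H → ℝ} (hup : HasUpperCurvature L f)
    {x gx y gy : H} (hx : IsSubgradient μ f x gx) (hy : IsSubgradient μ f y gy) :
    f y ≥ f x + ⟪gx, y - x⟫ + μ/2 * ‖y - x‖^2
      + 1/(2*(L-μ)) * ‖gy - gx - μ • (y - x)‖^2 := by
  have hc0 : (0:ℝ) < L - μ := by linarith
  set u := gy - gx - μ • (y - x) with hu
  set w := (L-μ)⁻¹ • u with hw
  have huw : u = (L-μ) • w := by rw [hw, smul_inv_smul₀ hc0.ne']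
  set z := y - w with hz
  have H1 := hx z
  have H2 := upper_smooth hup hy z
  have ezx : z - x = (y - x) - w := by rw [hz]; abel
  have ezy : z - y = -w := by rw [hz]; abel
  rw [ezx, inner_sub_right, norm_sub_sq_real] at H1
  rw [ezy, inner_neg_right, norm_neg] at H2
  have ekey : ⟪gy, w⟫ - ⟪gx, w⟫ - μ*⟪y - x, w⟫ = (L-μ)*‖w‖^2 := by
    have h1 : ⟪u, w⟫ = (L-μ)*‖w‖^2 := by
      rw [huw, real_inner_smul_left, real_inner_self_eq_norm_sq]
    calc ⟪gy, w⟫ - ⟪gx, w⟫ - μ*⟪y - x, w⟫ = ⟪gy - gx - μ • (y - x), w⟫ := by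
          simp [inner_sub_left, real_inner_smul_left]
      _ = (L-μ)*‖w‖^2 := h1
  have efin : 1/(2*(L-μ)) * ‖u‖^2 = (L-μ)/2 * ‖w‖^2 := by
    rw [huw, norm_smul, Real.norm_eq_abs, mul_pow, sq_abs]
    field_simp
  rw [ge_iff_le, efin]
  nlinarith [H1, H2, ekey, real_inner_comm (y-x) w]

lemma key_id (mu1 mu2 L1 L2 A B D Pa Qb F1x F1xp F2x F2xp G : ℝ)
    (hm1 : mu1 ≠ 0) (hm2 : mu2 ≠ 0) (hL2 : L2 ≠ 0)
    (hL1m1 : L1 - mu1 ≠ 0) (hL2m2 : L2 - mu2 ≠ 0) (hL2p : L2 + mu2 ≠ 0)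
    (hqpL1 : mu1*mu2*L2 - (mu2*L2 + mu1*L2 + mu1*mu2)*L1 ≠ 0)
    (hqpm1 : mu1*mu2*L2 - (mu2*L2 + mu1*L2 + mu1*mu2)*mu1 ≠ 0) :
    ((F1x - F2x) - (F1xp - F2xp))
      - (-(mu2*L2 + mu1*L2 + mu1*mu2)/(mu1*mu2*L2 - (mu2*L2 + mu1*L2 + mu1*mu2)*L1)) * (1/2) * A
      - 1/(L2+mu2)*(1/2)*B
    = (F1x - F1xp + G - mu1/2*D - 1/(2*(L1-mu1))*(A + 2*mu1*Pa + mu1^2*D))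
      + L2/(L2+mu2) * (F2xp - F2x - G - mu2/2*D - 1/(2*(L2-mu2))*(B + 2*mu2*Qb + mu2^2*D))
      + (-mu2)/(L2+mu2) * (F2x - F2xp + G - Qb - mu2/2*D - 1/(2*(L2-mu2))*(B + 2*mu2*Qb + mu2^2*D))
      + (mu1*mu2*L2 - (mu2*L2 + mu1*L2 + mu1*mu2)*mu1)/(2*(L1-mu1)*(mu1*mu2*L2 - (mu2*L2 + mu1*L2 + mu1*mu2)*L1))
        * (A + 2*(mu1*(mu1*mu2*L2 - (mu2*L2 + mu1*L2 + mu1*mu2)*L1)/(mu1*mu2*L2 - (mu2*L2 + mu1*L2 + mu1*mu2)*mu1))*Pa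
           + (mu1*(mu1*mu2*L2 - (mu2*L2 + mu1*L2 + mu1*mu2)*L1)/(mu1*mu2*L2 - (mu2*L2 + mu1*L2 + mu1*mu2)*mu1))^2*D) := by
  generalize hP : mu1*mu2*L2 - (mu2*L2 + mu1*L2 + mu1*mu2)*L1 = P at hqpL1 ⊢
  generalize hQ : mu1*mu2*L2 - (mu2*L2 + mu1*L2 + mu1*mu2)*mu1 = Q at hqpm1 ⊢
  field_simp
  subst hP hQ
  ring

lemma key_id2 (mu1 mu2 L2 B D Qb F2x F2xp G F1xp : ℝ)
    (hm1 : mu1 ≠ 0) (hm2 : mu2 ≠ 0) (hL2 : L2 ≠ 0)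
    (hL2m2 : L2 - mu2 ≠ 0) (hL2p : L2 + mu2 ≠ 0)
    (hqpm1 : mu1*mu2*L2 - (mu2*L2 + mu1*L2 + mu1*mu2)*mu1 ≠ 0) :
    (((F1xp - G + mu1/2*D) - F2x) - (F1xp - F2xp))
      - (-(mu2*L2 + mu1*L2 + mu1*mu2)/(mu1*mu2*L2 - (mu2*L2 + mu1*L2 + mu1*mu2)*mu1)) * (1/2) * (mu1^2*D)
      - 1/(L2+mu2)*(1/2)*B
    = L2/(L2+mu2) * (F2xp - F2x - G - mu2/2*D - 1/(2*(L2-mu2))*(B + 2*mu2*Qb + mu2^2*D))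
      + (-mu2)/(L2+mu2) * (F2x - F2xp + G - Qb - mu2/2*D - 1/(2*(L2-mu2))*(B + 2*mu2*Qb + mu2^2*D)) := by
  generalize hQ : mu1*mu2*L2 - (mu2*L2 + mu1*L2 + mu1*mu2)*mu1 = Q at hqpm1 ⊢
  field_simp
  subst hQ
  ring

lemma sig_eq (mu1 mu2 L1 L2 : ℝ)
    (hm1 : mu1 ≠ 0) (hm2 : mu2 ≠ 0) (hL1 : L1 ≠ 0) (hL2 : L2 ≠ 0)
    (hden : 1/mu1 + 1/mu2 + 1/L2 - 1/L1 ≠ 0)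
    (hqpL1 : mu1*mu2*L2 - (mu2*L2 + mu1*L2 + mu1*mu2)*L1 ≠ 0) :
    (1/L1) * (1/mu1 + 1/mu2 + 1/L2) / (1/mu1 + 1/mu2 + 1/L2 - 1/L1)
    = -(mu2*L2 + mu1*L2 + mu1*mu2)/(mu1*mu2*L2 - (mu2*L2 + mu1*L2 + mu1*mu2)*L1) := by
  rw [div_eq_div_iff hden hqpL1]
  field_simp
  ring

/-- one-step decrease, regime p3. -/
theorem dca_one_step_p3
    (mu1 mu2 L1 L2 : ℝ)
    (h1 : -mu2 < mu1) (h2 : 0 < -mu2) (h3 : mu1 < L2) (h4 : mu2 < L1)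
    (h5 : (1 / L1) * (2 + L2 / mu2) ≤ 1 / mu1 + 1 / mu2 + 1 / L2)
    (h6 : 1 / mu1 + 1 / mu2 + 1 / L2 ≤ 0)
    (f1 f2 : H → ℝ)
    (h1lo : HasLowerCurvature mu1 f1) (h1up : HasUpperCurvature L1 f1)
    (h2lo : HasLowerCurvature mu2 f2) (h2up : HasUpperCurvature L2 f2)
    (x xp g1 g2 g2p : H)
    (hg2 : IsSubgradient mu2 f2 x g2) (hg1p : IsSubgradient mu1 f1 xp g2)
    (hg1 : IsSubgradient mu1 f1 x g1) (hg2p : IsSubgradient mu2 f2 xp g2p) :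
    (f1 x - f2 x) - (f1 xp - f2 xp) ≥
      (1 / L1) * (1 / mu1 + 1 / mu2 + 1 / L2) / (1 / mu1 + 1 / mu2 + 1 / L2 - 1 / L1) *
        ((1 : ℝ) / 2) * ‖g1 - g2‖ ^ 2 +
      1 / (L2 + mu2) * ((1 : ℝ) / 2) * ‖g2 - g2p‖ ^ 2 := by
  by_cases hH : ∀ v : H, v = 0
  · have hxx : x = xp := by rw [hH x, hH xp]
    have e1 : g1 - g2 = (0:H) := hH _
    have e2 : g2 - g2p = (0:H) := hH _
    rw [hxx, e1, e2]
    simp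
  · push_neg at hH
    obtain ⟨v, hv⟩ := hH
    have hm1 : 0 < mu1 := by linarith
    have hm2 : mu2 < 0 := by linarith
    have hL2 : 0 < L2 := by linarith
    have hL2p : (0:ℝ) < L2 + mu2 := by linarith
    have hm2L2 : mu2 < L2 := by linarith
    have hvv : (0:ℝ) < ‖v‖^2 := pow_pos (norm_pos_iff.mpr hv) 2
    have hL1m1 : mu1 ≤ L1 := by
      by_contra hlt
      push_neg at hlt
      have hsum := h1lo.add h1up
      have hcv := hsum.2 (Set.mem_univ v) (Set.mem_univ (-v))
        (by norm_num : (0:ℝ) ≤ 1/2) (by norm_num : (0:ℝ) ≤ 1/2) (by norm_num)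
      have hzero : (1/2:ℝ) • v + (1/2:ℝ) • (-v) = (0:H) := by module
      rw [hzero] at hcv
      simp only [Pi.add_apply, smul_eq_mul, norm_zero, norm_neg] at hcv
      nlinarith [hcv, mul_pos (sub_pos.mpr hlt) hvv]
    have hL1 : (0:ℝ) < L1 := lt_of_lt_of_le hm1 hL1m1
    have hq : mu1*mu2*L2 < 0 := mul_neg_of_neg_of_pos (mul_neg_of_pos_of_neg hm1 hm2) hL2
    have hs0 : (0:ℝ) ≤ -(1/mu1 + 1/mu2 + 1/L2) := by linarith
    have h1sL1 : (0:ℝ) < 1 + -(1/mu1 + 1/mu2 + 1/L2)*L1 := by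
      have := mul_nonneg hs0 hL1.le; linarith
    have h1sm1 : (0:ℝ) < 1 + -(1/mu1 + 1/mu2 + 1/L2)*mu1 := by
      have := mul_nonneg hs0 hm1.le; linarith
    have hfac1 : mu1*mu2*L2 - (mu2*L2 + mu1*L2 + mu1*mu2)*L1
        = (mu1*mu2*L2)*(1 + -(1/mu1+1/mu2+1/L2)*L1) := by
      field_simp [hm1.ne', hm2.ne, hL2.ne']
      ring
    have hfac2 : mu1*mu2*L2 - (mu2*L2 + mu1*L2 + mu1*mu2)*mu1
        = (mu1*mu2*L2)*(1 + -(1/mu1+1/mu2+1/L2)*mu1) := by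
      field_simp [hm1.ne', hm2.ne, hL2.ne']
      ring
    have hqpL1 : mu1*mu2*L2 - (mu2*L2 + mu1*L2 + mu1*mu2)*L1 < 0 := by
      rw [hfac1]; exact mul_neg_of_neg_of_pos hq h1sL1
    have hqpm1 : mu1*mu2*L2 - (mu2*L2 + mu1*L2 + mu1*mu2)*mu1 < 0 := by
      rw [hfac2]; exact mul_neg_of_neg_of_pos hq h1sm1
    have hden : 1/mu1 + 1/mu2 + 1/L2 - 1/L1 < 0 := by
      have : (0:ℝ) < 1/L1 := by positivity
      linarith
    rw [sig_eq mu1 mu2 L1 L2 hm1.ne' hm2.ne hL1.ne' hL2.ne' hden.ne hqpL1.ne]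
    -- f2-side interpolation facts
    have J3 := interp_ineq hm2L2 h2up hg2 hg2p
    have J4 := interp_ineq hm2L2 h2up hg2p hg2
    have hv3 : g2p - g2 - mu2 • (xp - x) = -((g2 - g2p) + mu2 • (xp - x)) := by module
    have hv4 : g2 - g2p - mu2 • (x - xp) = (g2 - g2p) + mu2 • (xp - x) := by module
    have hxxp : x - xp = -(xp - x) := by module
    have hip4 : ⟪g2p, x - xp⟫ = -⟪g2, xp - x⟫ + ⟪g2 - g2p, xp - x⟫ := by
      rw [hxxp, inner_neg_right, inner_sub_left]; ring
    have hip2 : ⟪g2, x - xp⟫ = -⟪g2, xp - x⟫ := by rw [hxxp, inner_neg_right]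
    have hnd : ‖x - xp‖ = ‖xp - x‖ := norm_sub_rev x xp
    rw [hv3, norm_neg, norm_add_smul_sq] at J3
    rw [hv4, hip4, hnd, norm_add_smul_sq] at J4
    have hlam3 : (0:ℝ) ≤ L2/(L2+mu2) := by positivity
    have hlam4 : (0:ℝ) ≤ -mu2/(L2+mu2) := div_nonneg (by linarith) (by linarith)
    have t3 := mul_nonneg hlam3 (by linarith [J3] :
      (0:ℝ) ≤ f2 xp - f2 x - ⟪g2, xp-x⟫ - mu2/2*‖xp-x‖^2
        - 1/(2*(L2-mu2))*(‖g2-g2p‖^2 + 2*mu2*⟪g2-g2p, xp-x⟫ + mu2^2*‖xp-x‖^2))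
    have t4 := mul_nonneg hlam4 (by linarith [J4] :
      (0:ℝ) ≤ f2 x - f2 xp + ⟪g2, xp-x⟫ - ⟪g2-g2p, xp-x⟫ - mu2/2*‖xp-x‖^2
        - 1/(2*(L2-mu2))*(‖g2-g2p‖^2 + 2*mu2*⟪g2-g2p, xp-x⟫ + mu2^2*‖xp-x‖^2))
    rcases eq_or_lt_of_le hL1m1 with hL1eq | hL1lt
    · -- degenerate branch L1 = mu1
      have hEq : L1 = mu1 := hL1eq.symm
      subst hEq
      have rep2 : ∀ z, f1 z = f1 xp + ⟪g2, z - xp⟫ + L1/2*‖z - xp‖^2 :=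
        fun z => le_antisymm (upper_smooth h1up hg1p z) (hg1p z)
      have rep1 : ∀ z, f1 z = f1 x + ⟪g1, z - x⟫ + L1/2*‖z - x‖^2 :=
        fun z => le_antisymm (upper_smooth h1up hg1 z) (hg1 z)
      set e := (g1 - g2) + L1 • (xp - x) with hedef
      have hz1 : x + e - x = e := by module
      have hz2 : x + e - xp = (x - xp) + e := by module
      have hh1 := rep2 (x + e)
      have hh2 := rep1 (x + e)
      have hh3 := rep2 x
      rw [hz2, inner_add_right, norm_add_sq_real] at hh1
      rw [hz1] at hh2
      have hkey0 : ⟪g2, e⟫ + L1*⟪x - xp, e⟫ - ⟪g1, e⟫ = 0 := by linarith [hh1, hh2, hh3]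
      have hee : ⟪e, e⟫ = (0:ℝ) := by
        have hexp : ⟪e, e⟫ = ⟪g1, e⟫ - ⟪g2, e⟫ - L1*⟪x - xp, e⟫ := by
          rw [hedef]
          rw [inner_add_left, inner_sub_left, real_inner_smul_left]
          rw [show xp - x = -(x - xp) from by module, inner_neg_left]
          ring
        rw [hexp]; linarith [hkey0]
      have he0 : e = 0 := by rwa [inner_self_eq_zero] at hee
      have hab : g1 - g2 = (-L1) • (xp - x) := by
        have : (g1 - g2) + L1 • (xp - x) = 0 := by rw [← hedef]; exact he0
        have h' := eq_neg_of_add_eq_zero_left this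
        rw [h']; module
      have hA : ‖g1 - g2‖^2 = L1^2*‖xp - x‖^2 := by
        rw [hab, norm_smul, Real.norm_eq_abs, mul_pow, sq_abs]
        ring
      have hf1 : f1 x = f1 xp - ⟪g2, xp - x⟫ + L1/2*‖xp - x‖^2 := by
        have := rep2 x
        rw [hip2, hnd] at this
        linarith
      have key := key_id2 L1 mu2 L2 (‖g2-g2p‖^2) (‖xp-x‖^2) (⟪g2-g2p, xp-x⟫)
        (f2 x) (f2 xp) (⟪g2, xp-x⟫) (f1 xp)
        hm1.ne' hm2.ne hL2.ne' (by linarith) hL2p.ne' hqpm1.ne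
      rw [hf1, hA]
      linarith [key, t3, t4]
    · -- main branch mu1 < L1
      have J2 := interp_ineq hL1lt h1up hg1p hg1
      have hv2 : g1 - g2 - mu1 • (x - xp) = (g1 - g2) + mu1 • (xp - x) := by module
      rw [hv2, hip2, hnd, norm_add_smul_sq] at J2
      have Ssq : (0:ℝ) ≤ ‖(g1 - g2) + (mu1*(mu1*mu2*L2 - (mu2*L2+mu1*L2+mu1*mu2)*L1)/(mu1*mu2*L2 - (mu2*L2+mu1*L2+mu1*mu2)*mu1)) • (xp - x)‖^2 := by positivity
      rw [norm_add_smul_sq] at Ssq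
      have halpha : (0:ℝ) ≤ (mu1*mu2*L2 - (mu2*L2+mu1*L2+mu1*mu2)*mu1)
          /(2*(L1-mu1)*(mu1*mu2*L2 - (mu2*L2+mu1*L2+mu1*mu2)*L1)) := by
        rw [div_nonneg_iff]
        right
        exact ⟨hqpm1.le, by nlinarith [hqpL1, hL1lt]⟩
      have talpha := mul_nonneg halpha Ssq
      have key := key_id mu1 mu2 L1 L2 (‖g1-g2‖^2) (‖g2-g2p‖^2) (‖xp-x‖^2)
        (⟪g1-g2, xp-x⟫) (⟪g2-g2p, xp-x⟫) (f1 x) (f1 xp) (f2 x) (f2 xp) (⟪g2, xp-x⟫)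
        hm1.ne' hm2.ne hL2.ne' (by linarith) (by linarith) hL2p.ne' hqpL1.ne hqpm1.ne
      linarith [key, J2, t3, t4, talpha]
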